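/- Let X be a real-valued integrable random variable with finite variance on a probability space, let m > 0 satisfy m > |E[X]|, and let Z = max(min(X, m), −m) be the truncation of X to [−m, m]. Then |E[Z] − E[X]| ≤ (1/4) · Var[X] / (m − |E[X]|). -/

import Mathlib

open MeasureTheory ProbabilityTheory

lemma trunc_pointwise (x μ m : ℝ) (hm : |μ| < m) :
    |max (min x m) (-m) - x| ≤ (x - μ) ^ 2 / (4 * (m - |μ|)) := by
  have ht : 0 < m - |μ| := by linarith
  have hμ1 : -|μ| ≤ μ := neg_abs_le μ
  have hμ2 : μ ≤ |μ| := le_abs_self μ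
  have habs : 0 ≤ |μ| := abs_nonneg μ
  rcases le_total x (-m) with hxm | hxm
  · have hxm' : x ≤ m := by linarith
    rw [min_eq_left hxm', max_eq_right (by linarith : x ≤ -m)]
    rw [abs_of_nonneg (by linarith : 0 ≤ -m - x), le_div_iff₀ (by linarith)]
    nlinarith [sq_nonneg (x - μ + 2 * (m - |μ|))]
  · rcases le_total x m with hxm2 | hxm2
    · rw [min_eq_left hxm2, max_eq_left hxm, sub_self, abs_zero]
      positivity
    · rw [min_eq_right hxm2, max_eq_left (by linarith : -m ≤ m)]
      rw [abs_of_nonpos (by linarith : m - x ≤ 0), le_div_iff₀ (by linarith)]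
      nlinarith [sq_nonneg (x - μ - 2 * (m - |μ|))]

/-- bias of the truncation. For an integrable real random variable `X` with
finite variance, `m > |E[X]|`, and `Z = max (min X m) (-m)` the truncation of `X` to
`[-m, m]`, one has `|E[Z] - E[X]| ≤ (1/4) · Var[X] / (m - |E[X]|)`. -/
theorem truncation_bias {Ω : Type*} [MeasureSpace Ω] [IsProbabilityMeasure (ℙ : Measure Ω)]
    (X : Ω → ℝ) (hXint : Integrable X) (hX2 : MemLp X 2 ℙ)
    (m : ℝ) (hm : 0 < m) (hmE : |∫ ω, X ω| < m)
    (Z : Ω → ℝ) (hZ : ∀ ω, Z ω = max (min (X ω) m) (-m)) :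
    |(∫ ω, Z ω) - ∫ ω, X ω| ≤ (1 / 4) * variance X ℙ / (m - |∫ ω, X ω|) := by
  set μ := ∫ ω, X ω with hμdef
  have ht : 0 < m - |μ| := by linarith
  have hZ' : Z = fun ω => max (min (X ω) m) (-m) := funext hZ
  have hZint : Integrable Z := by
    rw [hZ']
    exact (hXint.inf (integrable_const m)).sup (integrable_const (-m))
  have hsqint : Integrable (fun ω => (X ω - μ) ^ 2) := by
    have := (hX2.sub (memLp_const μ)).integrable_sq
    simpa using this
  have hrhsint : Integrable (fun ω => (X ω - μ) ^ 2 / (4 * (m - |μ|))) :=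
    hsqint.div_const _
  have h1 : |(∫ ω, Z ω) - μ| = |∫ ω, (Z ω - X ω)| := by
    rw [integral_sub hZint hXint]
  have h2 : |∫ ω, (Z ω - X ω)| ≤ ∫ ω, |Z ω - X ω| := by
    simpa [Real.norm_eq_abs] using
      norm_integral_le_integral_norm (μ := (ℙ : Measure Ω)) (fun ω => Z ω - X ω)
  have h3 : ∫ ω, |Z ω - X ω| ≤ ∫ ω, (X ω - μ) ^ 2 / (4 * (m - |μ|)) := by
    apply integral_mono ((hZint.sub hXint).abs) hrhsint
    intro ω
    simp only [Pi.sub_apply, Pi.abs_apply]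
    rw [hZ]
    exact trunc_pointwise (X ω) μ m hmE
  have h4 : ∫ ω, (X ω - μ) ^ 2 / (4 * (m - |μ|)) = (variance X ℙ) / (4 * (m - |μ|)) := by
    rw [integral_div]
    congr 1
    rw [variance_eq_integral hX2.aemeasurable]
  have hvar : (variance X ℙ) / (4 * (m - |μ|)) = (1 / 4) * variance X ℙ / (m - |μ|) := by
    field_simp
  calc |(∫ ω, Z ω) - μ| = |∫ ω, (Z ω - X ω)| := h1
    _ ≤ ∫ ω, |Z ω - X ω| := h2
    _ ≤ ∫ ω, (X ω - μ) ^ 2 / (4 * (m - |μ|)) := h3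
    _ = (1 / 4) * variance X ℙ / (m - |μ|) := by rw [h4, hvar]
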